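/- For all integers n ≥ 1, R_{0,2n} = (n!)² and R_{n,2n} = (n!)². -/

import Mathlib

namespace DescentParity

/-- Number of descent positions i (1-indexed adjacent pairs) of a permutation of {1,…,m}
    whose first (larger) entry is even. Entries of `Fin m` represent values via `(·:ℕ)+1`. -/
def desBegE (m : ℕ) (σ : Equiv.Perm (Fin m)) : ℕ :=
  (Finset.univ.filter (fun p : Fin m × Fin m =>
    (p.2 : ℕ) = (p.1 : ℕ) + 1 ∧ σ p.2 < σ p.1 ∧ Even ((σ p.1 : ℕ) + 1))).card

def desEndE (m : ℕ) (σ : Equiv.Perm (Fin m)) : ℕ :=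
  (Finset.univ.filter (fun p : Fin m × Fin m =>
    (p.2 : ℕ) = (p.1 : ℕ) + 1 ∧ σ p.2 < σ p.1 ∧ Even ((σ p.2 : ℕ) + 1))).card

def desBegO (m : ℕ) (σ : Equiv.Perm (Fin m)) : ℕ :=
  (Finset.univ.filter (fun p : Fin m × Fin m =>
    (p.2 : ℕ) = (p.1 : ℕ) + 1 ∧ σ p.2 < σ p.1 ∧ Odd ((σ p.1 : ℕ) + 1))).card

def desEndO (m : ℕ) (σ : Equiv.Perm (Fin m)) : ℕ :=
  (Finset.univ.filter (fun p : Fin m × Fin m =>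
    (p.2 : ℕ) = (p.1 : ℕ) + 1 ∧ σ p.2 < σ p.1 ∧ Odd ((σ p.2 : ℕ) + 1))).card

/-- The first entry σ₁ of the permutation is even. -/
def firstEven (m : ℕ) (σ : Equiv.Perm (Fin m)) : Prop :=
  ∃ i : Fin m, (i : ℕ) = 0 ∧ Even ((σ i : ℕ) + 1)

def firstOdd (m : ℕ) (σ : Equiv.Perm (Fin m)) : Prop :=
  ∃ i : Fin m, (i : ℕ) = 0 ∧ Odd ((σ i : ℕ) + 1)

instance (m : ℕ) (σ : Equiv.Perm (Fin m)) : Decidable (firstEven m σ) := by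
  unfold firstEven; infer_instance

instance (m : ℕ) (σ : Equiv.Perm (Fin m)) : Decidable (firstOdd m σ) := by
  unfold firstOdd; infer_instance

def R (k m : ℕ) : ℕ :=
  (Finset.univ.filter (fun σ : Equiv.Perm (Fin m) => desBegE m σ = k)).card

def M (k m : ℕ) : ℕ :=
  (Finset.univ.filter (fun σ : Equiv.Perm (Fin m) => desBegO m σ = k)).card

def P0 (k m : ℕ) : ℕ :=
  (Finset.univ.filter (fun σ : Equiv.Perm (Fin m) => firstOdd m σ ∧ desEndE m σ = k)).card

def P1 (k m : ℕ) : ℕ :=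
  (Finset.univ.filter (fun σ : Equiv.Perm (Fin m) => firstEven m σ ∧ desEndE m σ = k)).card

def Q0 (k m : ℕ) : ℕ :=
  (Finset.univ.filter (fun σ : Equiv.Perm (Fin m) => firstEven m σ ∧ desEndO m σ = k)).card

def Q1 (k m : ℕ) : ℕ :=
  (Finset.univ.filter (fun σ : Equiv.Perm (Fin m) => firstOdd m σ ∧ desEndO m σ = k)).card



section Aux

open Classical in
/-- even-descent predicate at index i -/
noncomputable def dE (m : ℕ) (σ : Equiv.Perm (Fin m)) : Finset (Fin m) :=
  Finset.univ.filter (fun i =>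
    ∃ h : (i : ℕ) + 1 < m, σ ⟨(i : ℕ) + 1, h⟩ < σ i ∧ Even ((σ i : ℕ) + 1))

lemma mem_dE {m : ℕ} {σ : Equiv.Perm (Fin m)} {i : Fin m} :
    i ∈ dE m σ ↔ ∃ h : (i : ℕ) + 1 < m, σ ⟨(i : ℕ) + 1, h⟩ < σ i ∧ Even ((σ i : ℕ) + 1) := by
  simp [dE]

lemma desBegE_eq (m : ℕ) (σ : Equiv.Perm (Fin m)) : desBegE m σ = (dE m σ).card := by
  classical
  unfold desBegE
  apply Finset.card_bij (fun p _ => p.1)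
  · rintro ⟨a, b⟩ hab
    simp only [Finset.mem_filter, Finset.mem_univ, true_and] at hab
    obtain ⟨h1, h2, h3⟩ := hab
    have hlt : (a : ℕ) + 1 < m := h1 ▸ b.isLt
    have hb : b = ⟨(a : ℕ) + 1, hlt⟩ := Fin.ext h1
    exact mem_dE.mpr ⟨hlt, hb ▸ h2, h3⟩
  · rintro ⟨a, b⟩ hab ⟨c, d⟩ hcd h
    simp only [Finset.mem_filter, Finset.mem_univ, true_and] at hab hcd
    simp only at h
    subst h
    exact Prod.ext rfl (Fin.ext (by rw [hab.1, hcd.1]))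
  · intro a ha
    obtain ⟨h1, h2, h3⟩ := mem_dE.mp ha
    refine ⟨(a, ⟨(a : ℕ) + 1, h1⟩), ?_, rfl⟩
    simp only [Finset.mem_filter, Finset.mem_univ, true_and]
    exact ⟨h2, h3⟩


variable {m : ℕ}

def shift (p : Fin (m + 1)) : Equiv.Perm (Fin (m + 1)) :=
  (Fin.revPerm.trans (Fin.cycleRange p.rev)).trans Fin.revPerm

lemma shift_apply_lt {p j : Fin (m + 1)} (h : j < p) : shift p j = j := by
  simp only [shift, Equiv.trans_apply, Fin.revPerm_apply]
  rw [Fin.cycleRange_of_gt (by rwa [Fin.rev_lt_rev]), Fin.rev_rev]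

lemma shift_apply_self (p : Fin (m + 1)) : shift p p = Fin.last m := by
  simp only [shift, Equiv.trans_apply, Fin.revPerm_apply]
  rw [Fin.cycleRange_self]
  apply Fin.ext
  simp [Fin.val_rev]

lemma shift_apply_gt {p j : Fin (m + 1)} (h : p < j) : (shift p j : ℕ) = (j : ℕ) - 1 := by
  simp only [shift, Equiv.trans_apply, Fin.revPerm_apply]
  rw [Fin.cycleRange_of_lt (by rwa [Fin.rev_lt_rev])]
  have hj : 1 ≤ (j : ℕ) := by
    have := Fin.lt_iff_val_lt_val.mp h; omega
  have hrev : (j.rev : ℕ) = m - (j : ℕ) := by rw [Fin.val_rev]; omega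
  have hlt : (j.rev : ℕ) + 1 < m + 1 := by
    rw [hrev]; omega
  have : ((j.rev + 1 : Fin (m+1)) : ℕ) = (j.rev : ℕ) + 1 := by
    rw [Fin.val_add_one_of_lt]
    exact Fin.lt_iff_val_lt_val.mpr (by rw [Fin.val_last]; omega)
  rw [Fin.val_rev, this, hrev]
  omega

/-- extend a permutation of Fin m to Fin (m+1) fixing the last element -/
def pext (σ : Equiv.Perm (Fin m)) : Equiv.Perm (Fin (m + 1)) :=
  (finSuccEquivLast.trans (Equiv.optionCongr σ)).trans finSuccEquivLast.symm

@[simp] lemma pext_castSucc (σ : Equiv.Perm (Fin m)) (i : Fin m) :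
    pext σ (Fin.castSucc i) = Fin.castSucc (σ i) := by
  simp [pext]

@[simp] lemma pext_last (σ : Equiv.Perm (Fin m)) : pext σ (Fin.last m) = Fin.last m := by
  simp [pext]

/-- insert the largest value m+1 at position p into σ -/
def ins (σ : Equiv.Perm (Fin m)) (p : Fin (m + 1)) : Equiv.Perm (Fin (m + 1)) :=
  (shift p).trans (pext σ)

lemma ins_apply_lt (σ : Equiv.Perm (Fin m)) {p j : Fin (m + 1)} (h : j < p) :
    ins σ p j = Fin.castSucc (σ ⟨(j : ℕ), lt_of_lt_of_le (Fin.lt_iff_val_lt_val.mp h) (Nat.lt_succ_iff.mp p.isLt)⟩) := by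
  have hlt : (j : ℕ) < m := lt_of_lt_of_le (Fin.lt_iff_val_lt_val.mp h) (Nat.lt_succ_iff.mp p.isLt)
  have hj : j = Fin.castSucc (⟨(j : ℕ), hlt⟩ : Fin m) := Fin.ext rfl
  rw [ins, Equiv.trans_apply, shift_apply_lt h]
  conv_lhs => rw [hj]
  rw [pext_castSucc]

lemma ins_apply_self (σ : Equiv.Perm (Fin m)) (p : Fin (m + 1)) :
    ins σ p p = Fin.last m := by
  rw [ins, Equiv.trans_apply, shift_apply_self, pext_last]

lemma ins_apply_gt (σ : Equiv.Perm (Fin m)) {p j : Fin (m + 1)} (h : p < j) :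
    ins σ p j = Fin.castSucc (σ ⟨(j : ℕ) - 1, by have := j.isLt; have := Fin.lt_iff_val_lt_val.mp h; omega⟩) := by
  rw [ins, Equiv.trans_apply]
  have hv : (shift p j : ℕ) = (j : ℕ) - 1 := shift_apply_gt h
  have : shift p j = Fin.castSucc ⟨(j : ℕ) - 1, by have := j.isLt; have := Fin.lt_iff_val_lt_val.mp h; omega⟩ := Fin.ext (by simpa using hv)
  rw [this, pext_castSucc]

lemma ins_apply_succAbove (σ : Equiv.Perm (Fin m)) (p : Fin (m + 1)) (i : Fin m) :
    ins σ p (p.succAbove i) = Fin.castSucc (σ i) := by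
  rcases lt_or_ge (Fin.castSucc i) p with h | h
  · rw [Fin.succAbove_of_castSucc_lt p i h, ins_apply_lt σ h]
    congr 2
  · rw [Fin.succAbove_of_le_castSucc p i h]
    have h2 : p < i.succ := lt_of_le_of_lt h (Fin.castSucc_lt_succ (i := i))
    rw [ins_apply_gt σ h2]
    congr 2


lemma ins_injective :
    Function.Injective (fun q : Equiv.Perm (Fin m) × Fin (m + 1) => ins q.1 q.2) := by
  rintro ⟨σ, p⟩ ⟨σ', p'⟩ h
  simp only at h
  have hpp : p = p' := by
    by_contra hne
    have h1 : ins σ p p = Fin.last m := ins_apply_self σ p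
    have h2 : ins σ' p' p ≠ Fin.last m := by
      rcases lt_or_gt_of_ne hne with hlt | hgt
      · rw [ins_apply_lt σ' hlt]; exact Fin.ne_of_lt (Fin.castSucc_lt_last _)
      · rw [ins_apply_gt σ' hgt]; exact Fin.ne_of_lt (Fin.castSucc_lt_last _)
    rw [h] at h1; exact h2 h1
  subst hpp
  have hσ : σ = σ' := by
    apply Equiv.ext; intro i
    have := congrArg (fun τ : Equiv.Perm (Fin (m+1)) => τ (p.succAbove i)) h
    simp only [ins_apply_succAbove] at this
    exact Fin.castSucc_injective m this
  rw [hσ]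

lemma mem_dE_ins_succAbove (σ : Equiv.Perm (Fin m)) (p : Fin (m + 1)) (i : Fin m) :
    p.succAbove i ∈ dE (m + 1) (ins σ p) ↔ (i ∈ dE m σ ∧ (i : ℕ) + 1 ≠ (p : ℕ)) := by
  rcases Nat.lt_trichotomy ((i : ℕ) + 1) (p : ℕ) with hA | hB | hC
  · -- i+1 < p : j = castSucc i
    have hip : Fin.castSucc i < p := Fin.lt_iff_val_lt_val.mpr (by simp; omega)
    have hj : p.succAbove i = Fin.castSucc i := Fin.succAbove_of_castSucc_lt p i hip
    have him : (i : ℕ) + 1 < m := by have := p.isLt; omega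
    have hv1 : ins σ p (Fin.castSucc i) = Fin.castSucc (σ i) := by
      rw [ins_apply_lt σ (show Fin.castSucc i < p from hip)]
      congr 2
    have hlt2 : (⟨(i:ℕ)+1, by omega⟩ : Fin (m+1)) < p := Fin.lt_iff_val_lt_val.mpr hA
    have hv2 : ins σ p ⟨(i:ℕ)+1, by omega⟩ = Fin.castSucc (σ ⟨(i:ℕ)+1, him⟩) := by
      rw [ins_apply_lt σ hlt2]
    rw [hj, mem_dE, mem_dE]
    constructor
    · rintro ⟨h, hlt, hev⟩
      refine ⟨⟨him, ?_, ?_⟩, by omega⟩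
      · have : ins σ p ⟨(Fin.castSucc i : ℕ) + 1, h⟩ = Fin.castSucc (σ ⟨(i:ℕ)+1, him⟩) := by
          convert hv2 using 2
          exact Fin.ext (by simp)
        rw [this, hv1] at hlt
        exact Fin.castSucc_lt_castSucc_iff.mp hlt
      · rwa [hv1, Fin.coe_castSucc] at hev
    · rintro ⟨⟨h, hlt, hev⟩, -⟩
      refine ⟨by simp only [Fin.coe_castSucc]; omega, ?_, ?_⟩
      · have e2 : ins σ p ⟨(Fin.castSucc i : ℕ) + 1, by simp only [Fin.coe_castSucc]; omega⟩ = Fin.castSucc (σ ⟨(i:ℕ)+1, him⟩) := by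
          convert hv2 using 2
          exact Fin.ext (by simp)
        rw [e2, hv1]
        exact Fin.castSucc_lt_castSucc_iff.mpr hlt
      · rwa [hv1, Fin.coe_castSucc]
  · -- i+1 = p : broken pair
    have hip : Fin.castSucc i < p := Fin.lt_iff_val_lt_val.mpr (by simp; omega)
    have hj : p.succAbove i = Fin.castSucc i := Fin.succAbove_of_castSucc_lt p i hip
    have hv1 : ins σ p (Fin.castSucc i) = Fin.castSucc (σ i) := by
      rw [ins_apply_lt σ hip]; congr 2
    rw [hj, mem_dE]
    constructor
    · rintro ⟨h, hlt, hev⟩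
      exfalso
      have hp : (⟨(Fin.castSucc i : ℕ) + 1, h⟩ : Fin (m+1)) = p := Fin.ext (by simp; omega)
      rw [hp, ins_apply_self, hv1] at hlt
      exact absurd hlt (not_lt.mpr (Fin.le_last _))
    · rintro ⟨-, hne⟩; exact absurd hB hne
  · -- p ≤ i : j = succ i
    have hip : p ≤ Fin.castSucc i := by
      rw [Fin.le_iff_val_le_val]; simp; omega
    have hj : p.succAbove i = Fin.succ i := Fin.succAbove_of_le_castSucc p i hip
    rw [hj, mem_dE, mem_dE]
    have hjv : ((Fin.succ i : Fin (m+1)) : ℕ) = (i : ℕ) + 1 := rfl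
    constructor
    · rintro ⟨h, hlt, hev⟩
      have him : (i : ℕ) + 1 < m := by simpa [hjv] using h
      refine ⟨⟨him, ?_, ?_⟩, by omega⟩
      · have hgt1 : p < Fin.succ i := Fin.lt_iff_val_lt_val.mpr (by omega)
        have hgt2 : p < (⟨(Fin.succ i : ℕ) + 1, h⟩ : Fin (m+1)) := Fin.lt_iff_val_lt_val.mpr (by simp [hjv]; omega)
        rw [ins_apply_gt σ hgt1, ins_apply_gt σ hgt2] at hlt
        have e1 : (⟨((Fin.succ i : Fin (m+1)) : ℕ) - 1, by omega⟩ : Fin m) = i := Fin.ext (by simp [hjv])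
        have e2 : (⟨((⟨(Fin.succ i : ℕ) + 1, h⟩ : Fin (m+1)) : ℕ) - 1, by simp [hjv]; omega⟩ : Fin m) = ⟨(i:ℕ)+1, him⟩ := Fin.ext (by simp [hjv])
        rw [e1, e2] at hlt
        exact Fin.castSucc_lt_castSucc_iff.mp hlt
      · have hgt1 : p < Fin.succ i := Fin.lt_iff_val_lt_val.mpr (by omega)
        rw [ins_apply_gt σ hgt1] at hev
        have e1 : (⟨((Fin.succ i : Fin (m+1)) : ℕ) - 1, by omega⟩ : Fin m) = i := Fin.ext (by simp [hjv])
        rwa [e1, Fin.coe_castSucc] at hev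
    · rintro ⟨⟨him, hlt, hev⟩, -⟩
      have h : ((Fin.succ i : Fin (m+1)) : ℕ) + 1 < m + 1 := by omega
      refine ⟨h, ?_, ?_⟩
      · have hgt1 : p < Fin.succ i := Fin.lt_iff_val_lt_val.mpr (by omega)
        have hgt2 : p < (⟨(Fin.succ i : ℕ) + 1, h⟩ : Fin (m+1)) := Fin.lt_iff_val_lt_val.mpr (by simp [hjv]; omega)
        rw [ins_apply_gt σ hgt1, ins_apply_gt σ hgt2]
        have e1 : (⟨((Fin.succ i : Fin (m+1)) : ℕ) - 1, by omega⟩ : Fin m) = i := Fin.ext (by simp [hjv])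
        have e2 : (⟨((⟨(Fin.succ i : ℕ) + 1, h⟩ : Fin (m+1)) : ℕ) - 1, by simp [hjv]; omega⟩ : Fin m) = ⟨(i:ℕ)+1, him⟩ := Fin.ext (by simp [hjv])
        rw [e1, e2]
        exact Fin.castSucc_lt_castSucc_iff.mpr hlt
      · have hgt1 : p < Fin.succ i := Fin.lt_iff_val_lt_val.mpr (by omega)
        rw [ins_apply_gt σ hgt1]
        have e1 : (⟨((Fin.succ i : Fin (m+1)) : ℕ) - 1, by omega⟩ : Fin m) = i := Fin.ext (by simp [hjv])
        rwa [e1, Fin.coe_castSucc]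

lemma mem_dE_ins_self (σ : Equiv.Perm (Fin m)) (p : Fin (m + 1)) :
    p ∈ dE (m + 1) (ins σ p) ↔ ((p : ℕ) < m ∧ Even (m + 1)) := by
  rw [mem_dE]
  constructor
  · rintro ⟨h, hlt, hev⟩
    have hp : (p : ℕ) < m := by omega
    refine ⟨hp, ?_⟩
    rwa [ins_apply_self, Fin.val_last] at hev
  · rintro ⟨hp, hev⟩
    have h : (p : ℕ) + 1 < m + 1 := by omega
    refine ⟨h, ?_, ?_⟩
    · have hgt : p < (⟨(p:ℕ)+1, h⟩ : Fin (m+1)) := Fin.lt_iff_val_lt_val.mpr (by simp)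
      rw [ins_apply_gt σ hgt, ins_apply_self]
      exact Fin.castSucc_lt_last _
    · rwa [ins_apply_self, Fin.val_last]


open Classical

lemma card_dE_ins (σ : Equiv.Perm (Fin m)) (p : Fin (m + 1)) :
    desBegE (m + 1) (ins σ p) = (if (p : ℕ) < m ∧ Even (m + 1) then 1 else 0)
      + ((dE m σ).filter (fun i : Fin m => (i : ℕ) + 1 ≠ (p : ℕ))).card := by
  rw [desBegE_eq]
  set T := dE (m + 1) (ins σ p) with hT
  have h1 : T.card = (if p ∈ T then 1 else 0) + (T.erase p).card := by
    by_cases hp : p ∈ T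
    · rw [if_pos hp, Finset.card_erase_of_mem hp]
      have : 1 ≤ T.card := Finset.card_pos.mpr ⟨p, hp⟩
      omega
    · rw [if_neg hp, Finset.erase_eq_of_notMem hp, zero_add]
  have h2 : ((dE m σ).filter (fun i : Fin m => (i : ℕ) + 1 ≠ (p : ℕ))).card = (T.erase p).card := by
    apply Finset.card_bij (fun i _ => p.succAbove i)
    · intro i hi
      rw [Finset.mem_filter] at hi
      rw [Finset.mem_erase]
      exact ⟨Fin.succAbove_ne p i, (mem_dE_ins_succAbove σ p i).mpr ⟨hi.1, hi.2⟩⟩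
    · intro a _ b _ h
      exact Fin.succAbove_right_injective h
    · intro j hj
      rw [Finset.mem_erase] at hj
      obtain ⟨i, hi⟩ := Fin.exists_succAbove_eq (Ne.symm hj.1).symm
      have := (mem_dE_ins_succAbove σ p i).mp (hi ▸ hj.2)
      exact ⟨i, Finset.mem_filter.mpr ⟨this.1, this.2⟩, hi⟩
  rw [h1, ← h2]
  congr 1
  exact if_congr (mem_dE_ins_self σ p) rfl rfl

noncomputable def pB (σ : Equiv.Perm (Fin m)) : Finset (Fin (m + 1)) :=
  Finset.univ.filter (fun p => ∃ i ∈ dE m σ, (i : ℕ) + 1 = (p : ℕ))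

lemma mem_pB {σ : Equiv.Perm (Fin m)} {p : Fin (m + 1)} :
    p ∈ pB σ ↔ ∃ i ∈ dE m σ, (i : ℕ) + 1 = (p : ℕ) := by simp [pB]

lemma card_pB (σ : Equiv.Perm (Fin m)) : (pB σ).card = (dE m σ).card := by
  symm
  apply Finset.card_bij (fun i _ => (Fin.succ i : Fin (m + 1)))
  · intro i hi
    exact mem_pB.mpr ⟨i, hi, rfl⟩
  · intro a _ b _ h
    exact Fin.succ_injective m h
  · intro p hp
    obtain ⟨i, hi, hv⟩ := mem_pB.mp hp
    exact ⟨i, hi, Fin.ext hv⟩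

lemma pB_val_lt {σ : Equiv.Perm (Fin m)} {p : Fin (m + 1)} (hp : p ∈ pB σ) : (p : ℕ) < m := by
  obtain ⟨i, hi, hv⟩ := mem_pB.mp hp
  obtain ⟨h, -, -⟩ := mem_dE.mp hi
  omega

lemma last_not_mem_pB (σ : Equiv.Perm (Fin m)) : Fin.last m ∉ pB σ := by
  intro h
  have := pB_val_lt h
  simp [Fin.val_last] at this

lemma filterA_of_mem {σ : Equiv.Perm (Fin m)} {p : Fin (m + 1)} (hp : p ∈ pB σ) :
    ((dE m σ).filter (fun i : Fin m => (i : ℕ) + 1 ≠ (p : ℕ))).card + 1 = (dE m σ).card := by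
  obtain ⟨i₀, hi₀, hv₀⟩ := mem_pB.mp hp
  have hone : ((dE m σ).filter (fun i : Fin m => (i : ℕ) + 1 = (p : ℕ))).card = 1 := by
    rw [Finset.card_eq_one]
    refine ⟨i₀, ?_⟩
    ext j
    simp only [Finset.mem_filter, Finset.mem_singleton]
    constructor
    · rintro ⟨-, hj⟩
      exact Fin.ext (by omega)
    · rintro rfl
      exact ⟨hi₀, hv₀⟩
  have htot : ((dE m σ).filter (fun i : Fin m => (i : ℕ) + 1 = (p : ℕ))).card
      + ((dE m σ).filter (fun i : Fin m => (i : ℕ) + 1 ≠ (p : ℕ))).card = (dE m σ).card :=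
    Finset.card_filter_add_card_filter_not _
  omega

lemma filterA_of_not_mem {σ : Equiv.Perm (Fin m)} {p : Fin (m + 1)} (hp : p ∉ pB σ) :
    ((dE m σ).filter (fun i : Fin m => (i : ℕ) + 1 ≠ (p : ℕ))).card = (dE m σ).card := by
  have hzero : ((dE m σ).filter (fun i : Fin m => (i : ℕ) + 1 = (p : ℕ))).card = 0 := by
    rw [Finset.card_eq_zero, Finset.filter_eq_empty_iff]
    intro i hi hv
    exact hp (mem_pB.mpr ⟨i, hi, hv⟩)
  have htot : ((dE m σ).filter (fun i : Fin m => (i : ℕ) + 1 = (p : ℕ))).card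
      + ((dE m σ).filter (fun i : Fin m => (i : ℕ) + 1 ≠ (p : ℕ))).card = (dE m σ).card :=
    Finset.card_filter_add_card_filter_not _
  omega

lemma pB_card_pos {σ : Equiv.Perm (Fin m)} {p : Fin (m + 1)} (hp : p ∈ pB σ) :
    1 ≤ (dE m σ).card := by
  obtain ⟨i, hi, -⟩ := mem_pB.mp hp
  exact Finset.card_pos.mpr ⟨i, hi⟩

/-- master characterization, even case -/
lemma g_char_even (hm : Even (m + 1)) (σ : Equiv.Perm (Fin m)) (p : Fin (m + 1)) :
    desBegE (m + 1) (ins σ p)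
      = if p = Fin.last m ∨ p ∈ pB σ then (dE m σ).card else (dE m σ).card + 1 := by
  rw [card_dE_ins]
  by_cases hp : p = Fin.last m
  · subst hp
    rw [if_neg (by simp [Fin.val_last]), if_pos (Or.inl rfl),
      filterA_of_not_mem (last_not_mem_pB σ), zero_add]
  · have hval : (p : ℕ) < m := by
      have := p.isLt
      have : (p : ℕ) ≠ m := fun h => hp (Fin.ext (by simp [Fin.val_last, h]))
      omega
    rw [if_pos ⟨hval, hm⟩]
    by_cases hpb : p ∈ pB σ
    · rw [if_pos (Or.inr hpb)]
      have := filterA_of_mem hpb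
      omega
    · rw [if_neg (by rintro (h | h); exact hp h; exact hpb h)]
      rw [filterA_of_not_mem hpb]
      omega

/-- master characterization, odd case -/
lemma g_char_odd (hm : ¬ Even (m + 1)) (σ : Equiv.Perm (Fin m)) (p : Fin (m + 1)) :
    desBegE (m + 1) (ins σ p)
      = if p ∈ pB σ then (dE m σ).card - 1 else (dE m σ).card := by
  rw [card_dE_ins]
  rw [if_neg (by tauto)]
  by_cases hpb : p ∈ pB σ
  · rw [if_pos hpb]
    have := filterA_of_mem hpb
    omega
  · rw [if_neg hpb, filterA_of_not_mem hpb, zero_add]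

lemma count_p_even (hm : Even (m + 1)) (σ : Equiv.Perm (Fin m)) (k' : ℕ) :
    (Finset.univ.filter fun p : Fin (m + 1) => desBegE (m + 1) (ins σ p) = k').card
      = (if desBegE m σ = k' then k' + 1 else 0)
        + (if desBegE m σ + 1 = k' then m + 1 - k' else 0) := by
  rw [desBegE_eq m σ]
  have hcard_k : (Finset.univ.filter fun p : Fin (m + 1) =>
      desBegE (m + 1) (ins σ p) = (dE m σ).card).card = (dE m σ).card + 1 := by
    have hset : (Finset.univ.filter fun p : Fin (m + 1) => desBegE (m + 1) (ins σ p) = (dE m σ).card)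
        = insert (Fin.last m) (pB σ) := by
      ext p
      simp only [Finset.mem_filter, Finset.mem_univ, true_and, Finset.mem_insert]
      rw [g_char_even hm σ p]
      by_cases h : p = Fin.last m ∨ p ∈ pB σ
      · rw [if_pos h]; tauto
      · rw [if_neg h]; constructor
        · intro hc; omega
        · tauto
    rw [hset, Finset.card_insert_of_notMem (last_not_mem_pB σ), card_pB]
  by_cases h1 : (dE m σ).card = k'
  · subst h1
    rw [if_pos rfl, if_neg (by omega), add_zero]
    exact hcard_k
  · by_cases h2 : (dE m σ).card + 1 = k'
    · rw [if_neg h1, if_pos h2, zero_add]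
      have htot := Finset.card_filter_add_card_filter_not
        (s := (Finset.univ : Finset (Fin (m + 1))))
        (p := fun p => desBegE (m + 1) (ins σ p) = (dE m σ).card)
      have hcompl : (Finset.univ.filter fun p : Fin (m + 1) =>
          ¬ (desBegE (m + 1) (ins σ p) = (dE m σ).card)) = (Finset.univ.filter fun p : Fin (m + 1) =>
          desBegE (m + 1) (ins σ p) = k') := by
        apply Finset.filter_congr
        intro p _
        rw [g_char_even hm σ p]
        by_cases h : p = Fin.last m ∨ p ∈ pB σ
        · rw [if_pos h]; simp; omega
        · rw [if_neg h]; simp; omega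
      rw [← hcompl]
      rw [Finset.card_univ, Fintype.card_fin] at htot
      -- k ≤ m : since pB ∪ {last} ⊆ univ and card k+1 ≤ m+1
      have hkm : (dE m σ).card + 1 ≤ m + 1 := by
        rw [← hcard_k]
        calc (Finset.univ.filter fun p : Fin (m + 1) => desBegE (m + 1) (ins σ p) = (dE m σ).card).card
            ≤ (Finset.univ : Finset (Fin (m + 1))).card := Finset.card_filter_le _ _
          _ = m + 1 := by rw [Finset.card_univ, Fintype.card_fin]
      omega
    · rw [if_neg h1, if_neg h2, add_zero]
      rw [Finset.card_eq_zero, Finset.filter_eq_empty_iff]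
      intro p _
      rw [g_char_even hm σ p]
      by_cases h : p = Fin.last m ∨ p ∈ pB σ
      · rw [if_pos h]; omega
      · rw [if_neg h]; omega

lemma count_p_odd (hm : ¬ Even (m + 1)) (σ : Equiv.Perm (Fin m)) (k' : ℕ) :
    (Finset.univ.filter fun p : Fin (m + 1) => desBegE (m + 1) (ins σ p) = k').card
      = (if desBegE m σ = k' then m + 1 - k' else 0)
        + (if desBegE m σ = k' + 1 then k' + 1 else 0) := by
  rw [desBegE_eq m σ]
  have huniv_filter : (Finset.univ.filter (fun p : Fin (m + 1) => p ∈ pB σ)) = pB σ := by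
    ext p; simp
  by_cases h1 : (dE m σ).card = k'
  · subst h1
    rw [if_pos rfl, if_neg (by omega), add_zero]
    have hset : (Finset.univ.filter fun p : Fin (m + 1) => desBegE (m + 1) (ins σ p) = (dE m σ).card)
        = Finset.univ.filter (fun p : Fin (m + 1) => ¬ (p ∈ pB σ)) := by
      apply Finset.filter_congr
      intro p _
      rw [g_char_odd hm σ p]
      by_cases h : p ∈ pB σ
      · rw [if_pos h]
        have := pB_card_pos h
        simp only [h, not_true_eq_false, iff_false]
        omega
      · rw [if_neg h]
        simp [h]
    rw [hset]
    have htot := Finset.card_filter_add_card_filter_not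
      (s := (Finset.univ : Finset (Fin (m + 1))))
      (p := fun p : Fin (m + 1) => p ∈ pB σ)
    rw [huniv_filter, card_pB] at htot
    rw [Finset.card_univ, Fintype.card_fin] at htot
    omega
  · by_cases h2 : (dE m σ).card = k' + 1
    · rw [if_neg h1, if_pos h2, zero_add]
      have hset : (Finset.univ.filter fun p : Fin (m + 1) => desBegE (m + 1) (ins σ p) = k')
          = pB σ := by
        ext p
        simp only [Finset.mem_filter, Finset.mem_univ, true_and]
        rw [g_char_odd hm σ p]
        by_cases h : p ∈ pB σ
        · rw [if_pos h]
          have := pB_card_pos h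
          exact ⟨fun _ => h, fun _ => by omega⟩
        · rw [if_neg h]
          exact ⟨fun hc => absurd hc h1, fun hc => absurd hc h⟩
      rw [hset, card_pB]
      omega
    · rw [if_neg h1, if_neg h2, add_zero]
      rw [Finset.card_eq_zero, Finset.filter_eq_empty_iff]
      intro p _
      rw [g_char_odd hm σ p]
      by_cases h : p ∈ pB σ
      · rw [if_pos h]
        have := pB_card_pos h
        omega
      · rw [if_neg h]; omega


lemma ins_bijective :
    Function.Bijective (fun q : Equiv.Perm (Fin m) × Fin (m + 1) => ins q.1 q.2) := by
  rw [Fintype.bijective_iff_injective_and_card]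
  refine ⟨ins_injective, ?_⟩
  rw [Fintype.card_prod, Fintype.card_perm, Fintype.card_perm, Fintype.card_fin, Fintype.card_fin,
    Nat.factorial_succ, mul_comm]

lemma R_eq_sum (k' : ℕ) :
    R k' (m + 1) = ∑ σ : Equiv.Perm (Fin m),
      (Finset.univ.filter fun p : Fin (m + 1) => desBegE (m + 1) (ins σ p) = k').card := by
  rw [R]
  have h1 : (Finset.univ.filter (fun τ : Equiv.Perm (Fin (m + 1)) => desBegE (m + 1) τ = k')).card
      = ((Finset.univ : Finset (Equiv.Perm (Fin m) × Fin (m + 1))).filter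
          (fun q => desBegE (m + 1) (ins q.1 q.2) = k')).card := by
    symm
    apply Finset.card_bij (fun q _ => ins q.1 q.2)
    · intro q hq
      rw [Finset.mem_filter] at hq ⊢
      exact ⟨Finset.mem_univ _, hq.2⟩
    · intro a _ b _ h
      exact ins_injective h
    · intro τ hτ
      obtain ⟨q, hq⟩ := ins_bijective.2 τ
      refine ⟨q, ?_, hq⟩
      rw [Finset.mem_filter] at hτ ⊢
      have hq' : ins q.1 q.2 = τ := hq
      exact ⟨Finset.mem_univ _, by rw [hq']; exact hτ.2⟩
  rw [h1, Finset.card_filter, Fintype.sum_prod_type]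
  exact Finset.sum_congr rfl fun σ _ => (Finset.card_filter _ _).symm

lemma sum_ite_eq_mul_R (c w : ℕ) :
    ∑ σ : Equiv.Perm (Fin m), (if desBegE m σ = c then w else 0) = w * R c m := by
  rw [Finset.sum_ite, Finset.sum_const, Finset.sum_const_zero, add_zero, smul_eq_mul, R, mul_comm]

lemma R_succ_even_zero (hm : Even (m + 1)) : R 0 (m + 1) = R 0 m := by
  rw [R_eq_sum]
  have : ∀ σ : Equiv.Perm (Fin m),
      (Finset.univ.filter fun p : Fin (m + 1) => desBegE (m + 1) (ins σ p) = 0).card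
      = (if desBegE m σ = 0 then 1 else 0) := by
    intro σ
    have h2 : (if desBegE m σ + 1 = 0 then m + 1 - 0 else 0) = 0 := if_neg (by omega)
    rw [count_p_even hm σ 0, h2, add_zero]
  rw [Finset.sum_congr rfl fun σ _ => this σ, sum_ite_eq_mul_R]
  omega

lemma R_succ_even_succ (hm : Even (m + 1)) (j : ℕ) :
    R (j + 1) (m + 1) = (j + 2) * R (j + 1) m + (m - j) * R j m := by
  rw [R_eq_sum]
  have : ∀ σ : Equiv.Perm (Fin m),
      (Finset.univ.filter fun p : Fin (m + 1) => desBegE (m + 1) (ins σ p) = j + 1).card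
      = (if desBegE m σ = j + 1 then j + 2 else 0) + (if desBegE m σ = j then m - j else 0) := by
    intro σ
    rw [count_p_even hm σ (j + 1)]
    congr 1
    by_cases h : desBegE m σ = j
    · rw [if_pos (by omega), if_pos h]
      omega
    · rw [if_neg (by omega), if_neg h]
  rw [Finset.sum_congr rfl fun σ _ => this σ, Finset.sum_add_distrib,
    sum_ite_eq_mul_R, sum_ite_eq_mul_R]

lemma R_succ_odd (hm : ¬ Even (m + 1)) (k' : ℕ) :
    R k' (m + 1) = (m + 1 - k') * R k' m + (k' + 1) * R (k' + 1) m := by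
  rw [R_eq_sum]
  rw [Finset.sum_congr rfl fun σ _ => count_p_odd hm σ k', Finset.sum_add_distrib,
    sum_ite_eq_mul_R, sum_ite_eq_mul_R]

lemma desBegE_zero (σ : Equiv.Perm (Fin 0)) : desBegE 0 σ = 0 := by
  rw [desBegE, Finset.univ_eq_empty, Finset.filter_empty, Finset.card_empty]

lemma R_base (k : ℕ) : R k 0 = if k = 0 then 1 else 0 := by
  rw [R]
  by_cases hk : k = 0
  · subst hk
    rw [if_pos rfl]
    have : (Finset.univ.filter (fun σ : Equiv.Perm (Fin 0) => desBegE 0 σ = 0)) = Finset.univ := by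
      rw [Finset.filter_eq_self]
      exact fun σ _ => desBegE_zero σ
    rw [this, Finset.card_univ, Fintype.card_perm, Fintype.card_fin]
    rfl
  · rw [if_neg hk, Finset.card_eq_zero, Finset.filter_eq_empty_iff]
    intro σ _
    rw [desBegE_zero]
    omega


lemma choose_id_O (n k : ℕ) :
    (n + 1) * (Nat.choose n k * Nat.choose (n + 1) (k + 1))
      = (2 * n + 1 - k) * (Nat.choose n k)^2 + (k + 1) * (Nat.choose n (k + 1))^2 := by
  by_cases hk : k ≤ n
  · obtain ⟨d, hd⟩ : ∃ d, n = k + d := ⟨n - k, by omega⟩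
    subst hd
    have hab : Nat.choose (k + d) (k + 1) * (k + 1) = Nat.choose (k + d) k * ((k + d) - k) :=
      Nat.choose_succ_right_eq (k + d) k
    have hpas : Nat.choose (k + d + 1) (k + 1) = Nat.choose (k + d) k + Nat.choose (k + d) (k + 1) :=
      Nat.choose_succ_succ (k + d) k
    have hd2 : (k + d) - k = d := by omega
    have ht : 2 * (k + d) + 1 - k = k + 1 + 2 * d := by omega
    rw [hd2] at hab
    rw [hpas, ht]
    zify at hab ⊢
    linear_combination ((Nat.choose (k + d) k : ℤ) - (Nat.choose (k+d) (k+1) : ℤ)) * hab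
  · have h1 : Nat.choose n k = 0 := Nat.choose_eq_zero_of_lt (by omega)
    have h2 : Nat.choose n (k + 1) = 0 := Nat.choose_eq_zero_of_lt (by omega)
    rw [h1, h2]
    ring

lemma choose_id_E (n j : ℕ) :
    (n + 1) * (Nat.choose (n + 1) (j + 1))^2
      = (j + 2) * (Nat.choose n (j + 1) * Nat.choose (n + 1) (j + 2))
        + (2 * n + 1 - j) * (Nat.choose n j * Nat.choose (n + 1) (j + 1)) := by
  by_cases hk : j ≤ n
  · obtain ⟨d, hd⟩ : ∃ d, n = j + d := ⟨n - j, by omega⟩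
    subst hd
    have hab : Nat.choose (j + d) (j + 1) * (j + 1) = Nat.choose (j + d) j * d := by
      have := Nat.choose_succ_right_eq (j + d) j
      rwa [show (j + d) - j = d by omega] at this
    have he : Nat.choose (j + d + 1) (j + 2) * (j + 2) = Nat.choose (j + d + 1) (j + 1) * d := by
      have := Nat.choose_succ_right_eq (j + d + 1) (j + 1)
      rwa [show (j + d + 1) - (j + 1) = d by omega] at this
    have hpas : Nat.choose (j + d + 1) (j + 1) = Nat.choose (j + d) j + Nat.choose (j + d) (j + 1) :=
      Nat.choose_succ_succ (j + d) j
    have ht : 2 * (j + d) + 1 - j = j + 1 + 2 * d := by omega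
    rw [hpas] at he
    rw [ht, hpas]
    zify at hab he ⊢
    linear_combination (-(Nat.choose (j+d) (j+1) : ℤ)) * he
      + ((Nat.choose (j+d) j : ℤ) + (Nat.choose (j+d) (j+1) : ℤ)) * hab
  · have h1 : Nat.choose n j = 0 := Nat.choose_eq_zero_of_lt (by omega)
    have h2 : Nat.choose n (j + 1) = 0 := Nat.choose_eq_zero_of_lt (by omega)
    have h3 : Nat.choose (n + 1) (j + 1) = 0 := Nat.choose_eq_zero_of_lt (by omega)
    rw [h1, h2, h3]
    ring

lemma even_odd_aux (n : ℕ) : Even (2 * n + 1 + 1) ∧ ¬ Even (2 * n + 1) := by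
  constructor
  · exact ⟨n + 1, by ring⟩
  · intro h
    rw [Nat.even_iff] at h
    omega

lemma master (n : ℕ) :
    (∀ k, R k (2 * n) = (Nat.factorial n * Nat.choose n k)^2) ∧
    (∀ k, R k (2 * n + 1) = Nat.factorial n * Nat.factorial (n + 1)
      * (Nat.choose n k * Nat.choose (n + 1) (k + 1))) := by
  induction n with
  | zero =>
    constructor
    · intro k
      rw [show 2 * 0 = 0 by ring, R_base]
      rcases k with _ | k
      · simp
      · simp [Nat.choose_eq_zero_of_lt (by omega : 0 < k + 1)]
    · intro k
      rw [show 2 * 0 + 1 = 0 + 1 by ring, R_succ_odd (by rw [Nat.even_iff]; omega) k,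
        R_base, R_base]
      rcases k with _ | k
      · simp
      · simp [Nat.choose_eq_zero_of_lt (by omega : 0 < k + 1)]
  | succ n ih =>
    have h2 : 2 * (n + 1) = (2 * n + 1) + 1 := by ring
    have heven : ∀ k, R k (2 * (n + 1)) = (Nat.factorial (n+1) * Nat.choose (n+1) k)^2 := by
      intro k
      rcases k with _ | j
      · rw [h2, R_succ_even_zero (even_odd_aux n).1, ih.2 0]
        rw [Nat.choose_zero_right, Nat.choose_one_right, Nat.choose_zero_right,
          Nat.factorial_succ]
        ring
      · rw [h2, R_succ_even_succ (even_odd_aux n).1 j, ih.2 (j+1), ih.2 j]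
        have hE := choose_id_E n j
        rw [Nat.factorial_succ] at *
        simp only [show j + 1 + 1 = j + 2 from rfl]
        zify at hE ⊢
        linear_combination (-((Nat.factorial n : ℤ) * ((n+1) * (Nat.factorial n : ℤ)))) * hE
    refine ⟨heven, ?_⟩
    intro k
    have h3 : 2 * (n + 1) + 1 = (2 * (n + 1)) + 1 := rfl
    have hodd : ¬ Even (2 * (n + 1) + 1) := by
      intro h; rw [Nat.even_iff] at h; omega
    rw [h3, R_succ_odd hodd k, heven k, heven (k+1)]
    have hO := choose_id_O (n + 1) k
    have ht : 2 * (n + 1) + 1 - k = 2 * (n + 1) + 1 - k := rfl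
    rw [Nat.factorial_succ (n+1)] at *
    zify at hO ⊢
    have hcast : ((2 * (n + 1) + 1 - k : ℕ) : ℤ) = ((2 * (n+1) + 1 - k : ℕ) : ℤ) := rfl
    linear_combination (-((Nat.factorial (n+1) : ℤ))^2) * hO


end Aux

theorem stmt_2 (n : ℕ) (hn : 1 ≤ n) :
    R 0 (2*n) = (Nat.factorial n)^2 ∧ R n (2*n) = (Nat.factorial n)^2 := by
  have h := (master n).1
  constructor
  · rw [h 0, Nat.choose_zero_right, mul_one]
  · rw [h n, Nat.choose_self, mul_one]

end DescentParity
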